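/- Let (S,+) be a Clifford semigroup and 𝔯 a Rota–Baxter endomorphism of (S,+) whose image is commutative. Then the dual weak brace S_𝔯 with a ∘ b = a + 𝔯(a) + b - 𝔯(a) is a bi-weak brace: for all a, b, c ∈ S one has a + (b ∘ c) = (a + b) ∘ a⁻ ∘ (a + c) and a - a = a⁻ ∘ a. -/

import Mathlib

theorem stmt18 {S : Type*}
    (add : S → S → S) (neg : S → S)
    (assoc : ∀ a b c, add (add a b) c = add a (add b c))
    (inv1 : ∀ a, add (add a (neg a)) a = a)
    (inv2 : ∀ a, add (add (neg a) a) (neg a) = neg a)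
    (inv_unique : ∀ a b, add (add a b) a = a → add (add b a) b = b → b = neg a)
    (comm0 : ∀ a, add a (neg a) = add (neg a) a)
    (central : ∀ e, add e e = e → ∀ x, add e x = add x e)
    (R : S → S)
    (hRB1 : ∀ a b, add (R a) (R b) = R (add (add (add a (R a)) b) (neg (R a))))
    (hRB2 : ∀ a, add (add a (R a)) (neg (R a)) = a)
    (hhom : ∀ a b, R (add a b) = add (R a) (R b))
    (himcomm : ∀ a b, add (R a) (R b) = add (R b) (R a))
    (mul : S → S → S) (i : S → S)
    (hmul : ∀ a b, mul a b = add (add (add a (R a)) b) (neg (R a)))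
    (hi : ∀ a, i a = add (add (neg (R a)) (neg a)) (R a))
    : (∀ a b c, add a (mul b c) = mul (mul (add a b) (i a)) (add a c)) ∧
      (∀ a, add a (neg a) = mul (i a) a) := by
  have negneg : ∀ x, neg (neg x) = x := fun x => (inv_unique (neg x) x (inv2 x) (inv1 x)).symm
  have Eidem : ∀ x, add (add x (neg x)) (add x (neg x)) = add x (neg x) := fun x => by
    rw [← assoc (add x (neg x)) x (neg x), inv1]
  have Ecen : ∀ x y, add (add x (neg x)) y = add y (add x (neg x)) := fun x => central _ (Eidem x)
  have negE : ∀ x, neg (add x (neg x)) = add x (neg x) := fun x =>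
    (inv_unique _ _ (by rw [Eidem, Eidem]) (by rw [Eidem, Eidem])).symm
  have Rneg : ∀ x, R (neg x) = neg (R x) := fun x =>
    inv_unique (R x) (R (neg x)) (by rw [← hhom, ← hhom, inv1]) (by rw [← hhom, ← hhom, inv2])
  -- move a central idempotent leftwards in a right-assoc chain
  have mov : ∀ p, add p p = p → ∀ x y, add x (add p y) = add p (add x y) := fun p hp x y => by
    rw [← assoc, ← central p hp, assoc]
  -- swap two adjacent commuting elements
  have swap : ∀ p q, add p q = add q p → ∀ y, add p (add q y) = add q (add p y) :=
    fun p q h y => by rw [← assoc, h, assoc]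
  -- absorb
  have abs : ∀ x p, add x p = x → ∀ y, add x (add p y) = add x y := fun x p h y => by
    rw [← assoc, h]
  have imc1 : ∀ x y, add (neg (R x)) (R y) = add (R y) (neg (R x)) := fun x y => by
    rw [← Rneg, himcomm]
  have imc2 : ∀ x y, add (neg (R x)) (neg (R y)) = add (neg (R y)) (neg (R x)) := fun x y => by
    rw [← Rneg, ← Rneg, himcomm]
  have c1 : ∀ x, add x (add (neg x) x) = x := fun x => by rw [← assoc, inv1]
  have xEx : ∀ x, add x (add x (neg x)) = x := fun x => by rw [comm0, c1]
  have nxEx : ∀ x, add (neg x) (add x (neg x)) = neg x := fun x => by rw [← assoc, inv2]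
  -- neg of a sum
  have negadd : ∀ x y, neg (add x y) = add (neg y) (neg x) := by
    intro x y
    refine (inv_unique (add x y) (add (neg y) (neg x)) ?_ ?_).symm
    · simp only [assoc]
      rw [← assoc (neg x) x y, ← comm0 x, mov _ (Eidem x) (neg y) y,
        mov _ (Eidem x) y, c1 y, ← assoc x, xEx]
    · simp only [assoc]
      rw [← assoc (neg x) x, ← comm0 x, mov _ (Eidem x) (neg y),
        ← assoc (neg y) y, ← assoc _ (neg y) (neg x), inv2 y,
        Ecen x, assoc, nxEx]
  have hRB2' : ∀ x, add x (add (R x) (neg (R x))) = x := fun x => by rw [← assoc, hRB2]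
  have F3 : ∀ x, add (add (R x) (neg (R x))) (add (R (R x)) (neg (R (R x)))) = add (R x) (neg (R x)) := fun x => by
    rw [assoc, ← Ecen (R (R x)) (neg (R x)), ← assoc, hRB2' (R x)]
  have xE2 : ∀ x, add x (add (R (R x)) (neg (R (R x)))) = x := fun x => by
    have h := congrArg (fun t => add t (add (R (R x)) (neg (R (R x))))) (hRB2' x)
    rw [← h, assoc, F3, hRB2']
  constructor
  · intro a b c
    -- simplified form of u := mul (a+b) (i a)
    have hu : mul (add a b) (i a) =
        add (add (R a) (neg (R a)))
          (add a (add b (add (R b) (add (neg a) (neg (R b)))))) := by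
      simp only [hmul, hi, hhom, negadd, Rneg, negneg, assoc]
      rw [imc2 b a,
          ← assoc (R a) (neg (R a)) (neg (R b)),
          swap (R b) (neg (R a)) (imc1 a b).symm,
          ← assoc (R a) (neg (R a)),
          mov _ (Eidem (R a)) (neg a),
          mov _ (Eidem (R a)) (R b),
          ← assoc (add (R a) (neg (R a))) (add (R a) (neg (R a))),
          Eidem (R a),
          mov _ (Eidem (R a)) b,
          mov _ (Eidem (R a)) a, assoc]
    have hRu : R (mul (add a b) (i a)) =
        add (add (R (R a)) (neg (R (R a))))
          (add (add (R a) (neg (R a)))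
            (add (add (R (R b)) (neg (R (R b)))) (R b))) := by
      rw [hu]
      simp only [hhom, Rneg]
      rw [swap (R (R b)) (neg (R a)) (imc1 a (R b)).symm,
          swap (R b) (neg (R a)) (imc1 a b).symm,
          ← assoc (R a) (neg (R a)),
          ← Ecen (R (R b)) (R b)]
    have hnRu : neg (add (add (R (R a)) (neg (R (R a))))
          (add (add (R a) (neg (R a)))
            (add (add (R (R b)) (neg (R (R b)))) (R b)))) =
        add (add (R (R b)) (neg (R (R b))))
          (add (add (R a) (neg (R a)))
            (add (add (R (R a)) (neg (R (R a)))) (neg (R b)))) := by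
      simp only [negadd, negE, negneg]
      rw [assoc, assoc,
          mov _ (Eidem (R (R b))) (neg (R b)),
          mov _ (Eidem (R a)) (neg (R b)),
          ← Ecen (R (R a)) (neg (R b))]
    rw [hmul (mul (add a b) (i a)) (add a c), hRu, hnRu, hu, hmul b c]
    generalize hG1 : add (R a) (neg (R a)) = p1
    generalize hG2 : add (R (R a)) (neg (R (R a))) = p2
    generalize hG4 : add (R (R b)) (neg (R (R b))) = p4
    have i1 : add p1 p1 = p1 := hG1 ▸ Eidem (R a)
    have i2 : add p2 p2 = p2 := hG2 ▸ Eidem (R (R a))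
    have i4 : add p4 p4 = p4 := hG4 ▸ Eidem (R (R b))
    have ha1 : add a p1 = a := hG1 ▸ hRB2' a
    have ha2 : add a p2 = a := hG2 ▸ xE2 a
    have hrb4 : add (R b) p4 = R b := hG4 ▸ hRB2' (R b)
    simp only [assoc]
    rw [mov p2 i2 (neg (R b)),
        mov p1 i1 (neg (R b)),
        mov p4 i4 (neg (R b)),
        ← assoc (neg (R b)) (R b), ← comm0 (R b),
        mov p2 i2 (neg a),
        mov p1 i1 (neg a),
        mov p4 i4 (neg a),
        mov _ (Eidem (R b)) (neg a),
        ← assoc (neg a) a, ← comm0 a]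
    -- absorb p4 at R b
    rw [mov p4 i4 p1, mov p4 i4 p2, abs (R b) p4 hrb4]
    -- absorb E(Rb) at b
    rw [mov _ (Eidem (R b)) p1, mov _ (Eidem (R b)) p2, mov _ (Eidem (R b)) (R b),
        abs b _ (hRB2' b)]
    -- absorb E(a) at a
    rw [mov _ (Eidem a) p1, mov _ (Eidem a) p2, mov _ (Eidem a) (R b), mov _ (Eidem a) b,
        abs a _ (xEx a)]
    -- absorb p2 at a
    rw [mov p2 i2 (R b), mov p2 i2 b, abs a p2 ha2]
    -- absorb middle p1 at a
    rw [mov p1 i1 (R b), mov p1 i1 b, abs a p1 ha1]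
    -- trailing block
    rw [mov p4 i4 c, abs (R b) p4 hrb4]
    rw [mov p1 i1 c, mov p1 i1 (R b), mov p1 i1 b, abs a p1 ha1]
    rw [mov p2 i2 c, mov p2 i2 (R b), mov p2 i2 b, abs a p2 ha2]
    -- leading p1
    rw [← assoc p1 a, central p1 i1 a, ha1]
  · intro a
    simp only [hmul, hi, hhom, negadd, Rneg, negneg, negE, assoc]
    rw [swap (neg (R a)) (R (R a)) (imc1 a (R a)),
        ← assoc (neg (R (R a))) (R (R a)), ← comm0 (R (R a)),
        swap (neg (R (R a))) (R a) (imc1 (R a) a),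
        ← comm0 (R (R a))]
    rw [abs (R a) _ (hRB2' (R a)), hRB2' (R a),
        ← assoc (R a) (neg (R a)),
        mov _ (Eidem (R a)) (neg a),
        ← assoc (neg a) a, ← comm0 a,
        mov _ (Eidem a) (add (R a) (neg (R a))),
        inv1 (R a),
        mov _ (Eidem a) (neg (R a)),
        ← comm0 (R a)]
    rw [assoc a (neg a), ← Ecen (R a) (neg a),
        ← assoc a (add (R a) (neg (R a))) (neg a), hRB2' a]
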